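/- Let A : H → G be a bounded linear operator between Hilbert spaces and u ∈ G. Then u ∈ ran A if and only if γ := sup{ |⟨y, u⟩| / ‖A*y‖ : y ∈ G, A*y ≠ 0 } is finite; moreover, in that case the minimal preimage norm min{‖x‖ : Ax = u} equals γ. -/

import Mathlib

set_option synthInstance.maxHeartbeats 800000
set_option maxHeartbeats 1000000

open ContinuousLinearMap

lemma shmulyan_key {H G : Type*} [NormedAddCommGroup H] [InnerProductSpace ℂ H]
    [CompleteSpace H] [NormedAddCommGroup G] [InnerProductSpace ℂ G] [CompleteSpace G]
    (A : H →L[ℂ] G) (u : G) (γ : ℝ) (hγ0 : 0 ≤ γ)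
    (hγ : ∀ y : G, ‖(inner ℂ y u : ℂ)‖ ≤ γ * ‖adjoint A y‖) :
    ∃ x : H, A x = u ∧ ‖x‖ ≤ γ := by
  set T : G →L[ℂ] H := adjoint A with hT
  set f : G →ₗ[ℂ] ℂ := (innerSL ℂ u).toLinearMap with hf
  have hker : LinearMap.ker (T : G →ₗ[ℂ] H) ≤ LinearMap.ker f := by
    intro y hy
    have hy' : T y = 0 := hy
    have h0 : ‖(inner ℂ y u : ℂ)‖ ≤ γ * ‖T y‖ := hγ y
    rw [hy', norm_zero, mul_zero] at h0
    have : (inner ℂ y u : ℂ) = 0 := norm_le_zero_iff.mp h0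
    have : (inner ℂ u y : ℂ) = 0 := inner_eq_zero_symm.mpr this
    simpa [hf] using this
  set e := LinearMap.quotKerEquivRange (T : G →ₗ[ℂ] H) with he
  set fbar := Submodule.liftQ (LinearMap.ker (T : G →ₗ[ℂ] H)) f hker with hfbar
  set φ : LinearMap.range (T : G →ₗ[ℂ] H) →ₗ[ℂ] ℂ := fbar.comp e.symm.toLinearMap with hφ
  have heval : ∀ (y : G) (h : T y ∈ LinearMap.range (T : G →ₗ[ℂ] H)),
      φ ⟨T y, h⟩ = (inner ℂ u y : ℂ) := by
    intro y h
    have h1 : e (Submodule.Quotient.mk y) = ⟨T y, h⟩ := by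
      apply Subtype.ext
      simp [he, LinearMap.quotKerEquivRange_apply_mk]
    rw [hφ, LinearMap.comp_apply, ← h1, LinearEquiv.coe_toLinearMap,
      LinearEquiv.symm_apply_apply]
    simp [hfbar, hf]
  have bound : ∀ v : LinearMap.range (T : G →ₗ[ℂ] H), ‖φ v‖ ≤ γ * ‖v‖ := by
    rintro ⟨v, hv⟩
    obtain ⟨y, hy⟩ := hv
    have hy' : (⟨v, ⟨y, hy⟩⟩ : LinearMap.range (T : G →ₗ[ℂ] H)) = ⟨T y, ⟨y, rfl⟩⟩ :=
      Subtype.ext hy.symm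
    rw [hy', show φ ⟨T y, ⟨y, rfl⟩⟩ = inner ℂ u y from heval y ⟨y, rfl⟩]
    have : ‖(inner ℂ u y : ℂ)‖ = ‖(inner ℂ y u : ℂ)‖ := norm_inner_symm u y
    rw [this]
    calc ‖(inner ℂ y u : ℂ)‖ ≤ γ * ‖T y‖ := hγ y
    _ = γ * ‖(⟨T y, ⟨y, rfl⟩⟩ : LinearMap.range (T : G →ₗ[ℂ] H))‖ := rfl
  set φL := φ.mkContinuous γ bound with hφL
  have hφLnorm : ‖φL‖ ≤ γ := LinearMap.mkContinuous_norm_le φ hγ0 bound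
  obtain ⟨g, hg, hgnorm⟩ := exists_extension_norm_eq (LinearMap.range (T : G →ₗ[ℂ] H)) φL
  set x := (InnerProductSpace.toDual ℂ H).symm g with hx
  refine ⟨x, ?_, ?_⟩
  · apply ext_inner_right ℂ
    intro y
    have h1 : (inner ℂ (A x) y : ℂ) = inner ℂ x (T y) := (adjoint_inner_right A x y).symm
    have h2 : (inner ℂ x (T y) : ℂ) = g (T y) := InnerProductSpace.toDual_symm_apply
    have hm : T y ∈ LinearMap.range (T : G →ₗ[ℂ] H) := ⟨y, rfl⟩
    have h3 : g (T y) = φL ⟨T y, hm⟩ := hg ⟨T y, hm⟩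
    have h4 : φL ⟨T y, hm⟩ = φ ⟨T y, hm⟩ := rfl
    rw [h1, h2, h3, h4, heval]
  · have : ‖x‖ = ‖g‖ := LinearIsometryEquiv.norm_map _ g
    rw [this, hgnorm]
    exact hφLnorm

theorem shmulyan_range_criterion {H G : Type*} [NormedAddCommGroup H] [InnerProductSpace ℂ H]
    [CompleteSpace H] [NormedAddCommGroup G] [InnerProductSpace ℂ G] [CompleteSpace G]
    (A : H →L[ℂ] G) (u : G) :
    (u ∈ Set.range A ↔ ∃ γ : ℝ, ∀ y : G, ‖(inner ℂ y u : ℂ)‖ ≤ γ * ‖adjoint A y‖) ∧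
      (u ∈ Set.range A →
        sInf {r : ℝ | ∃ x : H, A x = u ∧ r = ‖x‖}
          = sSup {c : ℝ | ∃ y : G, adjoint A y ≠ 0 ∧ c = ‖(inner ℂ y u : ℂ)‖ / ‖adjoint A y‖}) := by
  have hfwd : ∀ (x : H), A x = u → ∀ y : G, ‖(inner ℂ y u : ℂ)‖ ≤ ‖x‖ * ‖adjoint A y‖ := by
    intro x hx y
    have h1 : (inner ℂ y u : ℂ) = inner ℂ (adjoint A y) x := by
      rw [adjoint_inner_left, hx]
    rw [h1]
    calc ‖(inner ℂ (adjoint A y) x : ℂ)‖ ≤ ‖adjoint A y‖ * ‖x‖ := norm_inner_le_norm _ _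
    _ = ‖x‖ * ‖adjoint A y‖ := mul_comm _ _
  constructor
  · constructor
    · rintro ⟨x, hx⟩
      exact ⟨‖x‖, hfwd x hx⟩
    · rintro ⟨γ, hγ⟩
      have hγ' : ∀ y : G, ‖(inner ℂ y u : ℂ)‖ ≤ max γ 0 * ‖adjoint A y‖ := fun y =>
        (hγ y).trans (mul_le_mul_of_nonneg_right (le_max_left γ 0) (norm_nonneg _))
      obtain ⟨x, hx, -⟩ := shmulyan_key A u (max γ 0) (le_max_right γ 0) hγ'
      exact ⟨x, hx⟩
  · rintro ⟨x₀, hx₀⟩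
    set S := {r : ℝ | ∃ x : H, A x = u ∧ r = ‖x‖} with hS
    set C := {c : ℝ | ∃ y : G, adjoint A y ≠ 0 ∧ c = ‖(inner ℂ y u : ℂ)‖ / ‖adjoint A y‖} with hC
    have hSne : S.Nonempty := ⟨‖x₀‖, x₀, hx₀, rfl⟩
    have hSlb : ∀ s ∈ S, (0:ℝ) ≤ s := by rintro s ⟨x, -, rfl⟩; exact norm_nonneg x
    have hSbdd : BddBelow S := ⟨0, hSlb⟩
    have hub : ∀ c ∈ C, ∀ s ∈ S, c ≤ s := by
      rintro c ⟨y, hy, rfl⟩ s ⟨x, hx, rfl⟩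
      rw [div_le_iff₀ (norm_pos_iff.mpr hy)]
      exact hfwd x hx y
    by_cases hCne : C.Nonempty
    · have hCbdd : BddAbove C := ⟨‖x₀‖, fun c hc => hub c hc _ ⟨x₀, hx₀, rfl⟩⟩
      set γ := sSup C with hγdef
      have hγ0 : 0 ≤ γ := by
        obtain ⟨c, hc⟩ := hCne
        refine le_trans ?_ (le_csSup hCbdd hc)
        obtain ⟨y, hy, rfl⟩ := hc
        positivity
      have hγ : ∀ y : G, ‖(inner ℂ y u : ℂ)‖ ≤ γ * ‖adjoint A y‖ := by
        intro y
        by_cases hy : adjoint A y = 0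
        · have h1 : (inner ℂ y u : ℂ) = inner ℂ (adjoint A y) x₀ := by
            rw [adjoint_inner_left, hx₀]
          rw [h1, hy, inner_zero_left, norm_zero]
          positivity
        · have hmem : ‖(inner ℂ y u : ℂ)‖ / ‖adjoint A y‖ ∈ C := ⟨y, hy, rfl⟩
          have := le_csSup hCbdd hmem
          rw [div_le_iff₀ (norm_pos_iff.mpr hy)] at this
          linarith [this]
      obtain ⟨x, hx, hxn⟩ := shmulyan_key A u γ hγ0 hγ
      apply le_antisymm
      · exact (csInf_le hSbdd ⟨x, hx, rfl⟩).trans hxn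
      · exact le_csInf hSne fun s hs => csSup_le hCne fun c hc => hub c hc s hs
    · rw [Set.not_nonempty_iff_eq_empty] at hCne
      have hA0 : ∀ y : G, adjoint A y = 0 := by
        intro y
        by_contra hy
        exact Set.eq_empty_iff_forall_notMem.mp hCne _ ⟨y, hy, rfl⟩
      have hu0 : u = 0 := by
        apply ext_inner_right ℂ
        intro y
        have : (inner ℂ u y : ℂ) = 0 := by
          have h1 : (inner ℂ y u : ℂ) = inner ℂ (adjoint A y) x₀ := by
            rw [adjoint_inner_left, hx₀]
          have : (inner ℂ y u : ℂ) = 0 := by rw [h1, hA0, inner_zero_left]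
          rw [← inner_conj_symm, this, map_zero]
        rw [this, inner_zero_left]
      have h0S : (0:ℝ) ∈ S := ⟨0, by rw [map_zero, hu0], norm_zero.symm⟩
      rw [hCne, Real.sSup_empty]
      exact le_antisymm (csInf_le hSbdd h0S) (le_csInf hSne hSlb)
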